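/- (Isolated cartesian product theorem) Let Q be a simple binary join query whose relations have total size m, G the hypergraph defined by Q, H ⊆ attset(Q) arbitrary, and I the set of isolated vertices. For any fractional edge packing W of G, Σ_{η ∈ config(Q, H)} |Join(Q''_isolated(η))| ≤ λ^{|H| − W_I} · m^{|I|}, where W_I = Σ_{Y ∈ I} (weight of Y under W). -/
import Mathlib


open scoped BigOperators Classical

namespace BinaryJoins

/-! ### Hypergraphs, fractional edge coverings and packings

A hypergraph is given by a finite vertex set `V : Finset α` and a finite
edge set `E : Finset (Finset α)`.  A weight assignment is a function
`W : Finset α → ℝ` (only its values on `E` matter). -/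

variable {α : Type} [DecidableEq α]

/-- The weight of a vertex `X`: the sum of the weights of all edges incident to `X`. -/
def vertexWeight (E : Finset (Finset α)) (W : Finset α → ℝ) (X : α) : ℝ :=
  ∑ e ∈ E.filter (fun e => X ∈ e), W e

/-- `W` is a fractional edge covering: edge weights lie in `[0,1]` and every
vertex of `V` has weight at least 1. -/
def IsFracEdgeCover (V : Finset α) (E : Finset (Finset α)) (W : Finset α → ℝ) : Prop :=
  (∀ e ∈ E, 0 ≤ W e ∧ W e ≤ 1) ∧ ∀ X ∈ V, 1 ≤ vertexWeight E W X

/-- `W` is a fractional edge packing: edge weights lie in `[0,1]` and every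
vertex of `V` has weight at most 1. -/
def IsFracEdgePack (V : Finset α) (E : Finset (Finset α)) (W : Finset α → ℝ) : Prop :=
  (∀ e ∈ E, 0 ≤ W e ∧ W e ≤ 1) ∧ ∀ X ∈ V, vertexWeight E W X ≤ 1

/-- The fractional edge covering number `ρ`: the smallest total weight of a
fractional edge covering. -/
noncomputable def rho (V : Finset α) (E : Finset (Finset α)) : ℝ :=
  sInf {t | ∃ W : Finset α → ℝ, IsFracEdgeCover V E W ∧ t = ∑ e ∈ E, W e}

/-- The fractional edge packing number `τ`: the largest total weight of a
fractional edge packing. -/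
noncomputable def tau (V : Finset α) (E : Finset (Finset α)) : ℝ :=
  sSup {t | ∃ W : Finset α → ℝ, IsFracEdgePack V E W ∧ t = ∑ e ∈ E, W e}

/-- A binary hypergraph: every edge is a 2-element subset of `V`, and every
vertex is incident to at least one edge. -/
def BinaryHG (V : Finset α) (E : Finset (Finset α)) : Prop :=
  (∀ e ∈ E, e ⊆ V ∧ e.card = 2) ∧ ∀ X ∈ V, ∃ e ∈ E, X ∈ e


/-! ### Tuples, relations, and join queries

`dom` is the domain of values; a tuple over a set `U` of attributes is
represented as a function `att → Option dom` that is `some`-valued exactly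
on `U`. -/

variable {att dom : Type}

/-- A (partial) tuple. -/
abbrev Tup (att dom : Type) := att → Option dom

/-- `u` is a tuple over the attribute set `U`. -/
def IsTupleOn (u : Tup att dom) (U : Set att) : Prop :=
  ∀ x : att, (u x).isSome ↔ x ∈ U

/-- The projection (restriction) of a tuple on an attribute set `V`. -/
noncomputable def restrict (u : Tup att dom) (V : Set att) : Tup att dom :=
  fun x => if x ∈ V then u x else none

/-- A relation: a finite set of tuples over a common scheme. -/
structure Relation (att dom : Type) where
  scheme : Finset att
  tuples : Set (Tup att dom)
  finite : tuples.Finite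
  wf : ∀ u ∈ tuples, IsTupleOn u ↑scheme

variable [DecidableEq att]

/-- A join query is a finite set of relations; `attset Q` is the set of all
attributes appearing in the schemes of its relations. -/
def attset (Q : Finset (Relation att dom)) : Finset att :=
  Q.biUnion fun R => R.scheme

/-- The result `Join(Q)` of a join query. -/
def JoinQ (Q : Finset (Relation att dom)) : Set (Tup att dom) :=
  { u | IsTupleOn u ↑(attset Q) ∧ ∀ R ∈ Q, restrict u ↑R.scheme ∈ R.tuples }

/-- A query is simple if no two distinct relations share a scheme. -/
def SimpleQ (Q : Finset (Relation att dom)) : Prop :=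
  ∀ R ∈ Q, ∀ S ∈ Q, R.scheme = S.scheme → R = S

/-- A query is binary if every relation's scheme has exactly two attributes. -/
def BinaryQ (Q : Finset (Relation att dom)) : Prop :=
  ∀ R ∈ Q, R.scheme.card = 2

/-- The input size `m` of a query. -/
noncomputable def inputSize (Q : Finset (Relation att dom)) : ℕ :=
  ∑ R ∈ Q, R.tuples.ncard

/-- The edge set of the hypergraph defined by `Q` (its vertex set is `attset Q`). -/
def edgeSet (Q : Finset (Relation att dom)) : Finset (Finset att) :=
  Q.image fun R => R.scheme

/-! ### Heavy and light values -/

/-- Value `x` is heavy on attribute `X`: some relation of `Q` has at least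
`m/λ` tuples carrying `x` on `X`. -/
def HeavyOn (Q : Finset (Relation att dom)) (lam : ℕ) (X : att) (x : dom) : Prop :=
  ∃ R ∈ Q, X ∈ R.scheme ∧
    (inputSize Q : ℝ) / (lam : ℝ) ≤ ({u ∈ R.tuples | u X = some x}.ncard : ℝ)

/-- Value `x` is heavy (on some attribute). -/
def Heavy (Q : Finset (Relation att dom)) (lam : ℕ) (x : dom) : Prop :=
  ∃ X : att, HeavyOn Q lam X x

/-- Value `x` appears in at least one relation of `Q`. -/
def Appears (Q : Finset (Relation att dom)) (x : dom) : Prop :=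
  ∃ R ∈ Q, ∃ X ∈ R.scheme, ∃ u ∈ R.tuples, u X = some x

/-- Value `x` appears on attribute `Y` in a relation of `Q`. -/
def AppearsOn (Q : Finset (Relation att dom)) (Y : att) (x : dom) : Prop :=
  ∃ R ∈ Q, Y ∈ R.scheme ∧ ∃ u ∈ R.tuples, u Y = some x

/-! ### Configurations and residual queries

Below, `Hv : att → dom → Prop` is the "heavy" predicate (`Hv X x` meaning
that value `x` is heavy on attribute `X`); in applications it is
instantiated with `HeavyOn Q lam`. -/

/-- The set `config(Q, H)` of configurations of `H`: tuples over `H` whose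
values are heavy. -/
def config (Hv : att → dom → Prop) (H : Finset att) : Set (Tup att dom) :=
  { η | IsTupleOn η ↑H ∧ ∀ X ∈ H, ∀ x : dom, η X = some x → Hv X x }

/-- The residual relation `R'ₑ(η)` (over `e \ H`) of the relation `R` with
scheme `e`, under configuration `η` of `H`: projections on `e \ H` of the
tuples of `R` that agree with `η` on `e ∩ H` and are light outside `H`. -/
def ResidualTuples (Q : Finset (Relation att dom)) (Hv : att → dom → Prop)
    (H : Finset att) (η : Tup att dom) (R : Relation att dom) : Set (Tup att dom) :=
  { v | ∃ w ∈ R.tuples,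
      (∀ X ∈ R.scheme ∩ H, w X = η X) ∧
      (∀ Y ∈ R.scheme \ H, ∀ y : dom, w Y = some y → ¬ Hv Y y ∧ Appears Q y) ∧
      v = restrict w ↑(R.scheme \ H) }

/-- The result of the residual query `Q'(η)`: tuples over `attset Q \ H`
whose projection on each active edge `e` belongs to `R'ₑ(η)`. -/
def JoinResidual (Q : Finset (Relation att dom)) (Hv : att → dom → Prop)
    (H : Finset att) (η : Tup att dom) : Set (Tup att dom) :=
  { u | IsTupleOn u ↑(attset Q \ H) ∧
      ∀ R ∈ Q, (R.scheme \ H).Nonempty →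
        restrict u ↑(R.scheme \ H) ∈ ResidualTuples Q Hv H η R }

/-- `m_η`: the total size of the relations of the residual query `Q'(η)`. -/
noncomputable def residualSize (Q : Finset (Relation att dom)) (Hv : att → dom → Prop)
    (H : Finset att) (η : Tup att dom) : ℕ :=
  ∑ R ∈ Q, if (R.scheme \ H).Nonempty then (ResidualTuples Q Hv H η R).ncard else 0

/-- Combine a tuple over a set disjoint from `H` with a configuration `η` over `H`. -/
def combine (H : Finset att) (η u : Tup att dom) : Tup att dom :=
  fun x => if x ∈ H then η x else u x

/-! ### Cross edges, isolated attributes, and the semi-join reduction -/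

/-- `e` is a cross edge w.r.t. `H`: it meets both `H` and its complement. -/
def IsCross (H : Finset att) (e : Finset att) : Prop :=
  (e ∩ H).Nonempty ∧ (e \ H).Nonempty

/-- The set `I` of isolated attributes: light attributes `X` such that `{X}`
is the only edge incident to `X` in the subgraph induced by the light
attributes `L = attset Q \ H`. -/
def isolatedSet (Q : Finset (Relation att dom)) (H : Finset att) : Finset att :=
  (attset Q \ H).filter fun X => ∀ R ∈ Q, X ∈ R.scheme → R.scheme \ H = {X}

/-- The unary tuple over `{X}` carrying value `x`. -/
def singletonTup (X : att) (x : dom) : Tup att dom :=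
  fun Y => if Y = X then some x else none

/-- `X` is a border attribute: a light attribute appearing in a cross edge. -/
def BorderAttr (Q : Finset (Relation att dom)) (H : Finset att) (X : att) : Prop :=
  X ∈ attset Q ∧ X ∉ H ∧ ∃ R ∈ Q, X ∈ R.scheme ∧ IsCross H R.scheme

/-- The set of values of the unary relation `R''_X(η)`: the intersection of
the residual relations `R'ₑ(η)` over all cross edges `e` containing `X`. -/
def Rpp (Q : Finset (Relation att dom)) (Hv : att → dom → Prop)
    (H : Finset att) (η : Tup att dom) (X : att) : Set dom :=
  { x | ∀ R ∈ Q, IsCross H R.scheme → X ∈ R.scheme →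
      singletonTup X x ∈ ResidualTuples Q Hv H η R }

/-- The cartesian product `Join(Q''_J(η))` of the unary relations `R''_X(η)`,
`X ∈ J` (for `J = I` this is `Join(Q''_isolated(η))`). -/
def JoinIso (Q : Finset (Relation att dom)) (Hv : att → dom → Prop)
    (H : Finset att) (η : Tup att dom) (J : Finset att) : Set (Tup att dom) :=
  { u | IsTupleOn u ↑J ∧ ∀ X ∈ J, ∀ x : dom, u X = some x → x ∈ Rpp Q Hv H η X }

/-! ### The query `Q*` and its hypergraph -/

/-- The result `Join(Q*)` of the query `Q*`: tuples over `I ∪ H` that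
(i) project into `R_e` for every cross edge `e` incident to `I`, (ii) take a
heavy value on every attribute of `H`, and (iii) take, on every `Y ∈ I`, a
value appearing on `Y` in a relation of `Q`. -/
def JoinStar (Q : Finset (Relation att dom)) (Hv : att → dom → Prop)
    (H : Finset att) : Set (Tup att dom) :=
  { t | IsTupleOn t ↑(isolatedSet Q H ∪ H) ∧
      (∀ R ∈ Q, IsCross H R.scheme → (R.scheme ∩ isolatedSet Q H).Nonempty →
        restrict t ↑R.scheme ∈ R.tuples) ∧
      (∀ X ∈ H, ∀ x : dom, t X = some x → Hv X x) ∧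
      (∀ Y ∈ isolatedSet Q H, ∀ y : dom, t Y = some y → AppearsOn Q Y y) }

/-- The edge set `E*` of the hypergraph `G*` of `Q*`: the cross edges of `G`
incident to `I`, a unary edge `{X}` for each `X ∈ H`, and a unary edge `{Y}`
for each `Y ∈ I`.  (Its vertex set is `V* = I ∪ H`.) -/
noncomputable def starEdges (Q : Finset (Relation att dom)) (H : Finset att) :
    Finset (Finset att) :=
  (edgeSet Q).filter (fun e => IsCross H e ∧ (e ∩ isolatedSet Q H).Nonempty)
    ∪ H.image (fun X => {X}) ∪ (isolatedSet Q H).image (fun Y => {Y})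

/-! ### The reduced query `Q''(η)` -/

/-- The reduced relation `R''ₑ(η)` of a light edge `e = scheme R`: the tuples
of `R'ₑ(η)` whose values on border attributes survive the semi-join
reduction. -/
def ReducedTuples (Q : Finset (Relation att dom)) (Hv : att → dom → Prop)
    (H : Finset att) (η : Tup att dom) (R : Relation att dom) : Set (Tup att dom) :=
  { u | u ∈ ResidualTuples Q Hv H η R ∧
      ∀ X ∈ R.scheme, BorderAttr Q H X → ∀ x : dom, u X = some x → x ∈ Rpp Q Hv H η X }

/-- The result `Join(Q''_light(η))`: tuples over `L \ I` whose projection on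
every light edge belongs to the corresponding reduced relation. -/
def JoinLight (Q : Finset (Relation att dom)) (Hv : att → dom → Prop)
    (H : Finset att) (η : Tup att dom) : Set (Tup att dom) :=
  { u | IsTupleOn u ↑((attset Q \ H) \ isolatedSet Q H) ∧
      ∀ R ∈ Q, R.scheme ∩ H = ∅ → restrict u ↑R.scheme ∈ ReducedTuples Q Hv H η R }

/-- The result `Join(Q''(η))` of the reduced query: tuples over `L` whose
projections on light edges are in the reduced relations and whose values on
isolated attributes are in the corresponding unary relations. -/
def JoinReduced (Q : Finset (Relation att dom)) (Hv : att → dom → Prop)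
    (H : Finset att) (η : Tup att dom) : Set (Tup att dom) :=
  { u | IsTupleOn u ↑(attset Q \ H) ∧
      (∀ R ∈ Q, R.scheme ∩ H = ∅ → restrict u ↑R.scheme ∈ ReducedTuples Q Hv H η R) ∧
      (∀ X ∈ isolatedSet Q H, ∀ x : dom, u X = some x → x ∈ Rpp Q Hv H η X) }



/-! ### Auxiliary lemmas for the proof -/

section AuxAnalytic
set_option linter.unusedSectionVars false

private lemma amgm_padded {ι : Type*} (s : Finset ι) (w z : ι → ℝ) (c : ℝ) (hc : 0 ≤ c)
    (hw : ∀ i ∈ s, 0 ≤ w i) (hz : ∀ i ∈ s, 0 ≤ z i) (hsum : ∑ i ∈ s, w i ≤ 1) :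
    c ^ (1 - ∑ i ∈ s, w i) * ∏ i ∈ s, z i ^ w i
      ≤ (1 - ∑ i ∈ s, w i) * c + ∑ i ∈ s, w i * z i := by
  classical
  have hnone : (none : Option ι) ∉ s.image some := by simp
  have h := Real.geom_mean_le_arith_mean_weighted (insert none (s.image some))
      (fun o => Option.elim o (1 - ∑ i ∈ s, w i) w)
      (fun o => Option.elim o c z) ?_ ?_ ?_
  · rw [Finset.prod_insert hnone, Finset.sum_insert hnone,
      Finset.prod_image (fun a _ b _ h => Option.some_injective _ h),
      Finset.sum_image (fun a _ b _ h => Option.some_injective _ h)] at h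
    simpa using h
  · intro o ho
    match o with
    | none => simpa using sub_nonneg.mpr hsum
    | some i =>
      simp only [Finset.mem_insert, Finset.mem_image] at ho
      obtain ⟨i', hi', h'⟩ := ho.resolve_left (by simp)
      cases Option.some_injective _ h'
      exact hw _ hi'
  · rw [Finset.sum_insert hnone, Finset.sum_image (fun a _ b _ h => Option.some_injective _ h)]
    simp
  · intro o ho
    match o with
    | none => simpa using hc
    | some i =>
      simp only [Finset.mem_insert, Finset.mem_image] at ho
      obtain ⟨i', hi', h'⟩ := ho.resolve_left (by simp)
      cases Option.some_injective _ h'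
      exact hz _ hi'

private lemma holder_padded {ι κ : Type*} (s : Finset ι) (t : Finset κ) (w : ι → ℝ)
    (f : ι → κ → ℝ)
    (hw : ∀ i ∈ s, 0 ≤ w i) (hf : ∀ i ∈ s, ∀ k ∈ t, 0 ≤ f i k)
    (hsum : ∑ i ∈ s, w i ≤ 1) :
    ∑ k ∈ t, ∏ i ∈ s, f i k ^ w i
      ≤ (t.card : ℝ) ^ (1 - ∑ i ∈ s, w i) * ∏ i ∈ s, (∑ k ∈ t, f i k) ^ w i := by
  classical
  rcases Finset.eq_empty_or_nonempty t with rfl | htne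
  · simp only [Finset.sum_empty]
    exact mul_nonneg (Real.rpow_nonneg (by positivity) _)
      (Finset.prod_nonneg fun i _ => Real.rpow_nonneg le_rfl _)
  by_cases hbad : ∃ i ∈ s, (∑ k ∈ t, f i k) = 0 ∧ w i ≠ 0
  · obtain ⟨i, his, hFi, hwi⟩ := hbad
    have hfz : ∀ k ∈ t, f i k = 0 :=
      (Finset.sum_eq_zero_iff_of_nonneg (fun k hk => hf i his k hk)).mp hFi
    have hL : ∑ k ∈ t, ∏ j ∈ s, f j k ^ w j = 0 := by
      refine Finset.sum_eq_zero fun k hk => Finset.prod_eq_zero his ?_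
      rw [hfz k hk, Real.zero_rpow hwi]
    have hR : ∏ j ∈ s, (∑ k ∈ t, f j k) ^ w j = 0 := by
      refine Finset.prod_eq_zero his ?_
      rw [hFi, Real.zero_rpow hwi]
    rw [hL, hR, mul_zero]
  · push_neg at hbad
    set F : ι → ℝ := fun i => ∑ k ∈ t, f i k with hF
    have hFnn : ∀ i ∈ s, 0 ≤ F i := fun i hi => Finset.sum_nonneg fun k hk => hf i hi k hk
    have hcard : (0 : ℝ) < t.card := by exact_mod_cast htne.card_pos
    have key : ∀ k ∈ t,
        ((t.card : ℝ)⁻¹) ^ (1 - ∑ i ∈ s, w i) * ∏ i ∈ s, (f i k / F i) ^ w i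
          ≤ (1 - ∑ i ∈ s, w i) * (t.card : ℝ)⁻¹ + ∑ i ∈ s, w i * (f i k / F i) := by
      intro k hk
      exact amgm_padded s w (fun i => f i k / F i) _ (by positivity) hw
        (fun i hi => div_nonneg (hf i hi k hk) (hFnn i hi)) hsum
    have hsum2 : ∑ k ∈ t, ((1 - ∑ i ∈ s, w i) * (t.card : ℝ)⁻¹ + ∑ i ∈ s, w i * (f i k / F i))
        ≤ 1 := by
      rw [Finset.sum_add_distrib, Finset.sum_const, nsmul_eq_mul]
      have h1 : (t.card : ℝ) * ((1 - ∑ i ∈ s, w i) * (t.card : ℝ)⁻¹) = 1 - ∑ i ∈ s, w i := by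
        field_simp
      rw [h1, Finset.sum_comm]
      have h2 : ∑ i ∈ s, ∑ k ∈ t, w i * (f i k / F i) ≤ ∑ i ∈ s, w i := by
        refine Finset.sum_le_sum fun i hi => ?_
        have heq : ∑ k ∈ t, w i * (f i k / F i) = w i * (F i / F i) := by
          rw [← Finset.mul_sum, ← Finset.sum_div]
        rw [heq]
        rcases eq_or_lt_of_le (hFnn i hi) with h0 | h0
        · rw [← h0]; simp [hw i hi]
        · rw [div_self h0.ne', mul_one]
      linarith
    have hchain := le_trans (Finset.sum_le_sum key) hsum2
    have hprodeq : ∀ k ∈ t, ∏ i ∈ s, (f i k / F i) ^ w i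
        = (∏ i ∈ s, f i k ^ w i) / ∏ i ∈ s, F i ^ w i := by
      intro k hk
      rw [← Finset.prod_div_distrib]
      exact Finset.prod_congr rfl fun i hi => Real.div_rpow (hf i hi k hk) (hFnn i hi) _
    have hP : (0 : ℝ) < ∏ i ∈ s, F i ^ w i := by
      refine Finset.prod_pos fun i hi => ?_
      rcases eq_or_ne (w i) 0 with h0 | h0
      · rw [h0, Real.rpow_zero]; exact one_pos
      · exact Real.rpow_pos_of_pos (lt_of_le_of_ne (hFnn i hi)
          (fun h => h0 (hbad i hi h.symm))) _
    rw [← Finset.mul_sum, Finset.sum_congr rfl hprodeq, ← Finset.sum_div] at hchain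
    have hA : (0:ℝ) < ((t.card : ℝ)⁻¹) ^ (1 - ∑ i ∈ s, w i) :=
      Real.rpow_pos_of_pos (by positivity) _
    rw [Real.inv_rpow hcard.le] at hchain hA
    set A := (t.card : ℝ) ^ (1 - ∑ i ∈ s, w i)
    rw [inv_pos] at hA
    calc ∑ k ∈ t, ∏ i ∈ s, f i k ^ w i
        = (A⁻¹ * ((∑ k ∈ t, ∏ i ∈ s, f i k ^ w i) / ∏ i ∈ s, F i ^ w i))
            * (A * ∏ i ∈ s, F i ^ w i) := by
          field_simp
      _ ≤ 1 * (A * ∏ i ∈ s, F i ^ w i) :=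
          mul_le_mul_of_nonneg_right hchain (mul_nonneg hA.le hP.le)
      _ = A * ∏ i ∈ s, F i ^ w i := one_mul _

end AuxAnalytic

section AuxCombinatorial

variable {Q : Finset (Relation att dom)} {Hv : att → dom → Prop} {H : Finset att}
  {eta : Tup att dom} {R : Relation att dom} {X Z : att}

private lemma aux_residual_subset :
    ResidualTuples Q Hv H eta R ⊆ (fun w => restrict w ↑(R.scheme \ H)) '' R.tuples := by
  rintro v ⟨w, hw, -, -, rfl⟩; exact ⟨w, hw, rfl⟩

private lemma aux_residual_finite : (ResidualTuples Q Hv H eta R).Finite :=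
  (R.finite.image _).subset aux_residual_subset

private lemma aux_residual_ncard_le : (ResidualTuples Q Hv H eta R).ncard ≤ R.tuples.ncard :=
  le_trans (Set.ncard_le_ncard aux_residual_subset (R.finite.image _))
    (Set.ncard_image_le R.finite)

private lemma aux_tuples_le_inputSize (hR : R ∈ Q) : R.tuples.ncard ≤ inputSize Q :=
  Finset.single_le_sum (f := fun S => S.tuples.ncard) (fun _ _ => Nat.zero_le _) hR

private lemma aux_iso_mem (hX : X ∈ isolatedSet Q H) :
    X ∈ attset Q ∧ X ∉ H ∧ ∀ R ∈ Q, X ∈ R.scheme → R.scheme \ H = {X} := by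
  have h := Finset.mem_filter.mp hX
  have h2 := Finset.mem_sdiff.mp h.1
  exact ⟨h2.1, h2.2, h.2⟩

private lemma aux_iso_edge (hB : BinaryQ Q) (hX : X ∈ isolatedSet Q H) (hR : R ∈ Q)
    (hXR : X ∈ R.scheme) :
    ∃ Z, Z ∈ H ∧ Z ≠ X ∧ R.scheme = {X, Z} ∧ IsCross H R.scheme := by
  obtain ⟨-, hXH, hiso⟩ := aux_iso_mem hX
  have hdiff := hiso R hR hXR
  obtain ⟨a, b, hab, hs⟩ := Finset.card_eq_two.mp (hB R hR)
  have hXab : X = a ∨ X = b := by rw [hs] at hXR; simpa using hXR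
  obtain ⟨Z, hZX, hsch⟩ : ∃ Z, Z ≠ X ∧ R.scheme = {X, Z} := by
    rcases hXab with rfl | rfl
    · exact ⟨b, Ne.symm hab, hs⟩
    · exact ⟨a, hab, by rw [hs, Finset.pair_comm]⟩
  have hZs : Z ∈ R.scheme := by rw [hsch]; simp
  have hZH : Z ∈ H := by
    by_contra hZH
    have hmem : Z ∈ R.scheme \ H := Finset.mem_sdiff.mpr ⟨hZs, hZH⟩
    rw [hdiff] at hmem
    exact hZX (Finset.mem_singleton.mp hmem)
  refine ⟨Z, hZH, hZX, hsch, ⟨Z, Finset.mem_inter.mpr ⟨hZs, hZH⟩⟩, ?_⟩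
  rw [hdiff]; exact ⟨X, Finset.mem_singleton_self X⟩

private lemma aux_singleton_inj :
    Function.Injective (fun x : dom => (singletonTup X x : Tup att dom)) := by
  intro a b h
  have h2 := congrFun h X
  simpa [singletonTup] using h2

private lemma aux_rpp_image_subset (hB : BinaryQ Q) (hX : X ∈ isolatedSet Q H) (hR : R ∈ Q)
    (hXR : X ∈ R.scheme) :
    (fun x => (singletonTup X x : Tup att dom)) '' Rpp Q Hv H eta X
      ⊆ ResidualTuples Q Hv H eta R := by
  rintro v ⟨x, hx, rfl⟩
  obtain ⟨Z, hZH, hZX, hsch, hcross⟩ := aux_iso_edge hB hX hR hXR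
  exact hx R hR hcross hXR

private lemma aux_rpp_finite (hB : BinaryQ Q) (hX : X ∈ isolatedSet Q H) (hR : R ∈ Q)
    (hXR : X ∈ R.scheme) : (Rpp Q Hv H eta X).Finite :=
  Set.Finite.of_finite_image
    (aux_residual_finite.subset (aux_rpp_image_subset hB hX hR hXR))
    aux_singleton_inj.injOn

private lemma aux_rpp_ncard_le (hB : BinaryQ Q) (hX : X ∈ isolatedSet Q H) (hR : R ∈ Q)
    (hXR : X ∈ R.scheme) :
    (Rpp Q Hv H eta X).ncard ≤ (ResidualTuples Q Hv H eta R).ncard := by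
  rw [← Set.ncard_image_of_injOn ((aux_singleton_inj (dom := dom) (X := X)).injOn)]
  exact Set.ncard_le_ncard (aux_rpp_image_subset hB hX hR hXR) aux_residual_finite

private lemma aux_residual_le_fiber {z : dom} (hZ : Z ∈ R.scheme ∩ H) (hetaZ : eta Z = some z) :
    (ResidualTuples Q Hv H eta R).ncard ≤ ({w ∈ R.tuples | w Z = some z}).ncard := by
  have hsub : ResidualTuples Q Hv H eta R ⊆
      (fun w => restrict w ↑(R.scheme \ H)) '' {w ∈ R.tuples | w Z = some z} := by
    rintro v ⟨w, hw, hagr, -, rfl⟩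
    exact ⟨w, ⟨hw, by rw [hagr Z hZ, hetaZ]⟩, rfl⟩
  have hfin : ({w ∈ R.tuples | w Z = some z}).Finite := R.finite.subset (Set.sep_subset _ _)
  exact le_trans (Set.ncard_le_ncard hsub (hfin.image _)) (Set.ncard_image_le hfin)

private lemma aux_fiber_sum_le (R : Relation att dom) (Z : att) (s : Finset dom) :
    ∑ z ∈ s, ({w ∈ R.tuples | w Z = some z}).ncard ≤ R.tuples.ncard := by
  classical
  have h2 : ∀ z : dom, ({w ∈ R.tuples | w Z = some z}).ncard
      = (R.finite.toFinset.filter fun w => w Z = some z).card := by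
    intro z
    rw [show {w ∈ R.tuples | w Z = some z}
        = ↑(R.finite.toFinset.filter fun w => w Z = some z) by
      ext w; simp [Set.Finite.mem_toFinset], Set.ncard_coe_finset]
  rw [Finset.sum_congr rfl fun z _ => h2 z]
  have hdisj : ∀ z ∈ s, ∀ z' ∈ s, z ≠ z' →
      Disjoint (R.finite.toFinset.filter fun w => w Z = some z)
        (R.finite.toFinset.filter fun w => w Z = some z') := by
    intro z _ z' _ hne
    refine Finset.disjoint_left.mpr fun w hw hw' => hne ?_
    have e1 := (Finset.mem_filter.mp hw).2
    have e2 := (Finset.mem_filter.mp hw').2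
    exact Option.some_injective _ (e1.symm.trans e2)
  rw [← Finset.card_biUnion hdisj]
  calc (s.biUnion fun z => R.finite.toFinset.filter fun w => w Z = some z).card
      ≤ R.finite.toFinset.card :=
        Finset.card_le_card (Finset.biUnion_subset.mpr fun z _ => Finset.filter_subset _ _)
    _ = R.tuples.ncard := (Set.ncard_eq_toFinset_card _ R.finite).symm

private lemma aux_heavy_finite (Q : Finset (Relation att dom)) (lam : ℕ) (Z : att)
    (hm : 0 < inputSize Q) (hlam : 0 < lam) :
    {x : dom | HeavyOn Q lam Z x}.Finite := by
  classical
  have hU : (⋃ R ∈ (Q : Set (Relation att dom)), (fun w => w Z) '' R.tuples).Finite :=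
    Set.Finite.biUnion Q.finite_toSet fun R _ => R.finite.image _
  refine Set.Finite.of_finite_image (hU.subset ?_) (Option.some_injective dom).injOn
  rintro o ⟨x, ⟨R, hR, hZR, hge⟩, rfl⟩
  have hpos : (0:ℝ) < (inputSize Q : ℝ) / (lam : ℝ) := by positivity
  have hnz : ({u ∈ R.tuples | u Z = some x}).ncard ≠ 0 := by
    intro h0
    rw [h0] at hge
    norm_num at hge
    linarith
  obtain ⟨w, hw, hwZ⟩ := Set.nonempty_of_ncard_ne_zero hnz
  exact Set.mem_biUnion hR ⟨w, hw, hwZ⟩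

set_option maxHeartbeats 1000000 in
private lemma aux_heavy_finset_le (Q : Finset (Relation att dom)) (lam : ℕ) (Z : att)
    (hlam : 0 < lam) (hml : lam ≤ inputSize Q) (s : Finset dom)
    (hs : ∀ x ∈ s, HeavyOn Q lam Z x) :
    ((s.card : ℝ)) ≤ (lam : ℝ) := by
  classical
  have key : ∀ x ∈ s, ((inputSize Q : ℝ) / (lam : ℝ))
      ≤ ∑ R ∈ Q, (({u ∈ R.tuples | u Z = some x}).ncard : ℝ) := by
    intro x hx
    obtain ⟨R, hR, -, hge⟩ := hs x hx
    have h0 : ∀ S ∈ Q, (0:ℝ) ≤ (({u ∈ S.tuples | u Z = some x}).ncard : ℝ) :=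
      fun S _ => Nat.cast_nonneg _
    have hsum : (({u ∈ R.tuples | u Z = some x}).ncard : ℝ)
        ≤ ∑ S ∈ Q, (({u ∈ S.tuples | u Z = some x}).ncard : ℝ) :=
      Finset.single_le_sum h0 hR
    exact le_trans hge hsum
  have h1 : (s.card : ℝ) * ((inputSize Q : ℝ) / lam) ≤ (inputSize Q : ℝ) := by
    have h2 := Finset.card_nsmul_le_sum s _ _ key
    rw [nsmul_eq_mul] at h2
    refine le_trans h2 ?_
    rw [Finset.sum_comm]
    have h3 : ∀ R ∈ Q, ∑ x ∈ s, (({u ∈ R.tuples | u Z = some x}).ncard : ℝ)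
        ≤ (R.tuples.ncard : ℝ) := by
      intro R _
      rw [← Nat.cast_sum]
      exact_mod_cast aux_fiber_sum_le R Z s
    calc ∑ R ∈ Q, ∑ x ∈ s, (({u ∈ R.tuples | u Z = some x}).ncard : ℝ)
        ≤ ∑ R ∈ Q, (R.tuples.ncard : ℝ) := Finset.sum_le_sum h3
      _ = (inputSize Q : ℝ) := by rw [inputSize]; push_cast; ring
  have hdiv : (0:ℝ) < (inputSize Q : ℝ) / lam := by
    have hmpos : 0 < inputSize Q := lt_of_lt_of_le hlam hml
    positivity
  have hml2 : (lam : ℝ) * ((inputSize Q : ℝ) / lam) = (inputSize Q : ℝ) := by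
    field_simp
  exact le_of_mul_le_mul_right (h1.trans_eq hml2.symm) hdiv

/-- The tuple over `H` associated with a choice function. -/
private noncomputable def toTup (H : Finset att) (f : ∀ a ∈ H, dom) : Tup att dom :=
  fun X => if h : X ∈ H then some (f X h) else none

private lemma toTup_inj {H : Finset att} : Function.Injective (toTup (dom := dom) H) := by
  intro f g h
  funext a ha
  have h2 := congrFun h a
  simp only [toTup, dif_pos ha] at h2
  exact Option.some_injective _ h2

private lemma aux_joiniso_le [Nonempty dom] {J : Finset att}
    (hfin : ∀ X ∈ J, (Rpp Q Hv H eta X).Finite) :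
    ((JoinIso Q Hv H eta J).ncard : ℝ) ≤ ∏ X ∈ J, ((Rpp Q Hv H eta X).ncard : ℝ) := by
  classical
  set RF : att → Finset dom := fun X => if h : X ∈ J then (hfin X h).toFinset else ∅ with hRF
  set Phi : Tup att dom → (∀ a ∈ J, dom) :=
    fun u => fun X _ => (u X).getD (Classical.arbitrary dom) with hPhi
  have hsub : Phi '' JoinIso Q Hv H eta J ⊆ ↑(J.pi RF) := by
    rintro p ⟨u, hu, rfl⟩
    rw [Finset.mem_coe, Finset.mem_pi]
    intro a ha
    have hsome : (u a).isSome := (hu.1 a).mpr (Finset.mem_coe.mpr ha)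
    obtain ⟨x, hx⟩ := Option.isSome_iff_exists.mp hsome
    have hmem := hu.2 a ha x hx
    simp only [hPhi, hx, Option.getD_some, hRF, dif_pos ha]
    exact (hfin a ha).mem_toFinset.mpr hmem
  have hinj : Set.InjOn Phi (JoinIso Q Hv H eta J) := by
    intro u hu v hv h
    funext X
    by_cases hX : X ∈ J
    · obtain ⟨x, hx⟩ := Option.isSome_iff_exists.mp ((hu.1 X).mpr (Finset.mem_coe.mpr hX))
      obtain ⟨y, hy⟩ := Option.isSome_iff_exists.mp ((hv.1 X).mpr (Finset.mem_coe.mpr hX))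
      have h2 := congrFun (congrFun h X) hX
      simp only [hPhi, hx, hy, Option.getD_some] at h2
      rw [hx, hy, h2]
    · rw [Option.not_isSome_iff_eq_none.mp
          (fun hs => hX (Finset.mem_coe.mp ((hu.1 X).mp hs))),
        Option.not_isSome_iff_eq_none.mp
          (fun hs => hX (Finset.mem_coe.mp ((hv.1 X).mp hs)))]
  have hcard : (JoinIso Q Hv H eta J).ncard ≤ (J.pi RF).card := by
    rw [← Set.ncard_image_of_injOn hinj, ← Set.ncard_coe_finset]
    exact Set.ncard_le_ncard hsub (J.pi RF).finite_toSet
  calc ((JoinIso Q Hv H eta J).ncard : ℝ) ≤ ((J.pi RF).card : ℝ) := by exact_mod_cast hcard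
    _ = ∏ X ∈ J, ((RF X).card : ℝ) := by rw [Finset.card_pi]; push_cast; ring
    _ = ∏ X ∈ J, ((Rpp Q Hv H eta X).ncard : ℝ) := by
        refine Finset.prod_congr rfl fun X hX => ?_
        rw [hRF]
        simp only [dif_pos hX]
        rw [Set.ncard_eq_toFinset_card _ (hfin X hX)]

private lemma aux_vw_eq (hS : SimpleQ Q) (W : Finset att → ℝ) (X : att) :
    vertexWeight (edgeSet Q) W X = ∑ R ∈ Q.filter fun R => X ∈ R.scheme, W R.scheme := by
  classical
  rw [vertexWeight]
  have himg : (edgeSet Q).filter (fun e => X ∈ e)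
      = (Q.filter fun R => X ∈ R.scheme).image fun R => R.scheme := by
    ext e
    simp only [edgeSet, Finset.mem_filter, Finset.mem_image]
    constructor
    · rintro ⟨⟨R, hR, rfl⟩, hXe⟩; exact ⟨R, ⟨hR, hXe⟩, rfl⟩
    · rintro ⟨R, ⟨hR, hXe⟩, rfl⟩; exact ⟨⟨R, hR, rfl⟩, hXe⟩
  rw [himg, Finset.sum_image]
  intro a ha b hb h
  exact hS a (Finset.mem_filter.mp ha).1 b (Finset.mem_filter.mp hb).1 h

end AuxCombinatorial

/-- **the isolated cartesian product theorem.** Let `Q` be a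
simple binary join query of total input size `m`, `H ⊆ attset Q`, `I` the
set of isolated attributes, and `W` a fractional edge packing of the
hypergraph of `Q`.  Then
`Σ_{η ∈ config(Q,H)} |Join(Q''_isolated(η))| ≤ λ^{|H| − W_I} · m^{|I|}`. -/
theorem isolated_cartesian_product [Finite att] [Countable dom] [Infinite dom]
    (Q : Finset (Relation att dom)) (hS : SimpleQ Q) (hB : BinaryQ Q)
    (lam : ℕ) (hlam1 : 1 ≤ lam) (hlam2 : lam ≤ inputSize Q)
    (H : Finset att) (hH : H ⊆ attset Q)
    (W : Finset att → ℝ) (hW : IsFracEdgePack (attset Q) (edgeSet Q) W) :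
    (∑ᶠ η ∈ config (HeavyOn Q lam) H,
        ((JoinIso Q (HeavyOn Q lam) H η (isolatedSet Q H)).ncard : ℝ))
      ≤ (lam : ℝ)
            ^ ((H.card : ℝ)
                - ∑ Y ∈ isolatedSet Q H, vertexWeight (edgeSet Q) W Y)
          * (inputSize Q : ℝ) ^ (isolatedSet Q H).card := by
  classical
  have hm0 : 0 < inputSize Q := lt_of_lt_of_le hlam1 hlam2
  have hmR : (0:ℝ) < (inputSize Q : ℝ) := by exact_mod_cast hm0
  have hlamR : (0:ℝ) < (lam : ℝ) := by exact_mod_cast hlam1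
  have hWnn : ∀ R ∈ Q, 0 ≤ W R.scheme := fun R hR =>
    (hW.1 R.scheme (Finset.mem_image_of_mem _ hR)).1
  have hheavy : ∀ Z : att, {x : dom | HeavyOn Q lam Z x}.Finite := fun Z =>
    aux_heavy_finite Q lam Z hm0 hlam1
  set hsF : att → Finset dom := fun Z => (hheavy Z).toFinset with hhsF
  have hsF_mem : ∀ Z z, z ∈ hsF Z ↔ HeavyOn Q lam Z z := fun Z z => (hheavy Z).mem_toFinset
  have hsF_card : ∀ Z : att, ((hsF Z).card : ℝ) ≤ (lam : ℝ) := fun Z =>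
    aux_heavy_finset_le Q lam Z hlam1 hlam2 (hsF Z) (fun x hx => (hsF_mem Z x).mp hx)
  -- write `config` as the image of a finite set of functions
  have hconfig : config (HeavyOn Q lam) H = toTup H '' ↑(H.pi fun Z => hsF Z) := by
    ext eta
    constructor
    · rintro ⟨h1, h2⟩
      have hsome : ∀ a ∈ H, (eta a).isSome := fun a ha =>
        (h1 a).mpr (Finset.mem_coe.mpr ha)
      refine ⟨fun a ha => (eta a).get (hsome a ha), ?_, ?_⟩
      · rw [Finset.mem_coe, Finset.mem_pi]
        intro a ha
        exact (hsF_mem a _).mpr (h2 a ha _ (Option.some_get (hsome a ha)).symm)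
      · funext X
        by_cases hX : X ∈ H
        · simp only [toTup, dif_pos hX, Option.some_get]
        · simp only [toTup, dif_neg hX]
          have hns : ¬ (eta X).isSome := fun hs => hX (Finset.mem_coe.mp ((h1 X).mp hs))
          exact (Option.not_isSome_iff_eq_none.mp hns).symm
    · rintro ⟨f, hf, rfl⟩
      rw [Finset.mem_coe, Finset.mem_pi] at hf
      refine ⟨?_, ?_⟩
      · intro a
        by_cases ha : a ∈ H
        · simp [toTup, dif_pos ha, ha]
        · simp [toTup, dif_neg ha, ha]
      · intro X hX x hx
        simp only [toTup, dif_pos hX] at hx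
        have hh := (hsF_mem X (f X hX)).mp (hf X hX)
        exact (Option.some_injective _ hx) ▸ hh
  rw [hconfig, finsum_mem_image (toTup_inj.injOn), finsum_mem_coe_finset]
  -- combinatorial decompositions
  set QX : att → Finset (Relation att dom) := fun X => Q.filter fun R => X ∈ R.scheme with hQX
  set CI : Finset (Relation att dom) := Q.filter fun R =>
    (R.scheme ∩ isolatedSet Q H).Nonempty with hCI
  set CIZ : att → Finset (Relation att dom) := fun Z => CI.filter fun R => Z ∈ R.scheme with hCIZ
  have hQXsub : ∀ X, QX X ⊆ Q := fun X => Finset.filter_subset _ _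
  have hCIZsub : ∀ Z, CIZ Z ⊆ Q :=
    fun Z => (Finset.filter_subset _ _).trans (Finset.filter_subset _ _)
  have hCb : CI = (isolatedSet Q H).biUnion QX := by
    ext R
    simp only [hCI, hQX, Finset.mem_filter, Finset.mem_biUnion]
    constructor
    · rintro ⟨hR, X, hXmem⟩
      obtain ⟨hXs, hXI⟩ := Finset.mem_inter.mp hXmem
      exact ⟨X, hXI, hR, hXs⟩
    · rintro ⟨X, hXI, hR, hXs⟩
      exact ⟨hR, X, Finset.mem_inter.mpr ⟨hXs, hXI⟩⟩
  have hdisjQX : (↑(isolatedSet Q H) : Set att).PairwiseDisjoint QX := by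
    intro X hX X' hX' hne
    refine Finset.disjoint_left.mpr fun R hR hR' => hne ?_
    obtain ⟨hRQ, hXs⟩ := Finset.mem_filter.mp hR
    obtain ⟨-, hX's⟩ := Finset.mem_filter.mp hR'
    have hdiff := (aux_iso_mem (Finset.mem_coe.mp hX)).2.2 R hRQ hXs
    have hX'H := (aux_iso_mem (Finset.mem_coe.mp hX')).2.1
    have hmem : X' ∈ R.scheme \ H := Finset.mem_sdiff.mpr ⟨hX's, hX'H⟩
    rw [hdiff] at hmem
    exact (Finset.mem_singleton.mp hmem).symm
  have hCZb : CI = H.biUnion CIZ := by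
    ext R
    simp only [hCIZ, Finset.mem_filter, Finset.mem_biUnion]
    constructor
    · intro hR
      have hR' := hR
      rw [hCI, Finset.mem_filter] at hR'
      obtain ⟨hRQ, X, hXmem⟩ := hR'
      obtain ⟨hXs, hXI⟩ := Finset.mem_inter.mp hXmem
      obtain ⟨Z, hZH, -, hsch, -⟩ := aux_iso_edge hB hXI hRQ hXs
      exact ⟨Z, hZH, hR, by rw [hsch]; simp⟩
    · rintro ⟨Z, -, hR, -⟩
      exact hR
  have hdisjCIZ : (↑H : Set att).PairwiseDisjoint CIZ := by
    intro Z hZ Z' hZ' hne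
    refine Finset.disjoint_left.mpr fun R hR hR' => hne ?_
    obtain ⟨hRCI, hZs⟩ := Finset.mem_filter.mp hR
    obtain ⟨-, hZ's⟩ := Finset.mem_filter.mp hR'
    rw [hCI, Finset.mem_filter] at hRCI
    obtain ⟨hRQ, X, hXmem⟩ := hRCI
    obtain ⟨hXs, hXI⟩ := Finset.mem_inter.mp hXmem
    obtain ⟨Zw, hZwH, hZwX, hsch, -⟩ := aux_iso_edge hB hXI hRQ hXs
    have hXnH := (aux_iso_mem hXI).2.1
    have hZeq : Z = Zw := by
      have : Z = X ∨ Z = Zw := by rw [hsch] at hZs; simpa using hZs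
      rcases this with rfl | h
      · exact absurd (Finset.mem_coe.mp hZ) hXnH
      · exact h
    have hZ'eq : Z' = Zw := by
      have : Z' = X ∨ Z' = Zw := by rw [hsch] at hZ's; simpa using hZ's
      rcases this with rfl | h
      · exact absurd (Finset.mem_coe.mp hZ') hXnH
      · exact h
    rw [hZeq, hZ'eq]
  -- weight bookkeeping
  have hwZ_nn : ∀ Z : att, 0 ≤ ∑ R ∈ CIZ Z, W R.scheme :=
    fun Z => Finset.sum_nonneg fun R hR => hWnn R (hCIZsub Z hR)
  have hwZ_le : ∀ Z ∈ H, ∑ R ∈ CIZ Z, W R.scheme ≤ 1 := by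
    intro Z hZ
    have hsub : CIZ Z ⊆ Q.filter fun R => Z ∈ R.scheme := fun R hR =>
      Finset.mem_filter.mpr ⟨hCIZsub Z hR, (Finset.mem_filter.mp hR).2⟩
    calc ∑ R ∈ CIZ Z, W R.scheme
        ≤ ∑ R ∈ Q.filter (fun R => Z ∈ R.scheme), W R.scheme :=
          Finset.sum_le_sum_of_subset_of_nonneg hsub
            (fun R hR _ => hWnn R (Finset.mem_filter.mp hR).1)
      _ = vertexWeight (edgeSet Q) W Z := (aux_vw_eq hS W Z).symm
      _ ≤ 1 := hW.2 Z (hH hZ)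
  have hWIeq : (∑ Y ∈ isolatedSet Q H, vertexWeight (edgeSet Q) W Y)
      = ∑ Z ∈ H, ∑ R ∈ CIZ Z, W R.scheme := by
    calc ∑ Y ∈ isolatedSet Q H, vertexWeight (edgeSet Q) W Y
        = ∑ Y ∈ isolatedSet Q H, ∑ R ∈ QX Y, W R.scheme :=
          Finset.sum_congr rfl fun Y _ => aux_vw_eq hS W Y
      _ = ∑ R ∈ CI, W R.scheme := by rw [hCb]; exact (Finset.sum_biUnion hdisjQX).symm
      _ = ∑ Z ∈ H, ∑ R ∈ CIZ Z, W R.scheme := by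
          rw [hCZb]; exact Finset.sum_biUnion hdisjCIZ
  -- the per-configuration bound
  have keyf : ∀ f ∈ H.pi (fun Z => hsF Z),
      ((JoinIso Q (HeavyOn Q lam) H (toTup H f) (isolatedSet Q H)).ncard : ℝ)
        ≤ (inputSize Q : ℝ)
            ^ (((isolatedSet Q H).card : ℝ) - ∑ Y ∈ isolatedSet Q H, vertexWeight (edgeSet Q) W Y)
          * ∏ x ∈ H.attach, ∏ R ∈ CIZ x.1,
              ((({w ∈ R.tuples | w x.1 = some (f x.1 x.2)}).ncard : ℝ)) ^ W R.scheme := by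
    intro f hf
    rw [Finset.mem_pi] at hf
    have hetaZ : ∀ (Z) (hZ : Z ∈ H), toTup H f Z = some (f Z hZ) := fun Z hZ => by
      simp only [toTup, dif_pos hZ]
    have hRppfin : ∀ X ∈ isolatedSet Q H,
        (Rpp Q (HeavyOn Q lam) H (toTup H f) X).Finite := by
      intro X hX
      have hXatt := (aux_iso_mem hX).1
      simp only [attset, Finset.mem_biUnion] at hXatt
      obtain ⟨R, hR, hXR⟩ := hXatt
      exact aux_rpp_finite hB hX hR hXR
    have h1 := aux_joiniso_le (Q := Q) (Hv := HeavyOn Q lam) (H := H)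
      (eta := toTup H f) hRppfin
    have h2 : ∀ X ∈ isolatedSet Q H,
        ((Rpp Q (HeavyOn Q lam) H (toTup H f) X).ncard : ℝ)
          ≤ (inputSize Q : ℝ) ^ (1 - vertexWeight (edgeSet Q) W X)
            * ∏ R ∈ QX X,
                ((ResidualTuples Q (HeavyOn Q lam) H (toTup H f) R).ncard : ℝ) ^ W R.scheme := by
      intro X hX
      have hXatt := (aux_iso_mem hX).1
      have hXatt' := hXatt
      simp only [attset, Finset.mem_biUnion] at hXatt'
      obtain ⟨R0, hR0, hXR0⟩ := hXatt'
      have hvw : vertexWeight (edgeSet Q) W X = ∑ R ∈ QX X, W R.scheme := aux_vw_eq hS W X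
      have hvw1 : vertexWeight (edgeSet Q) W X ≤ 1 := hW.2 X hXatt
      have hvw0 : 0 ≤ vertexWeight (edgeSet Q) W X := by
        rw [hvw]; exact Finset.sum_nonneg fun R hR => hWnn R (hQXsub X hR)
      have hr_m : ((Rpp Q (HeavyOn Q lam) H (toTup H f) X).ncard : ℝ) ≤ (inputSize Q : ℝ) := by
        have hA := aux_rpp_ncard_le (Hv := HeavyOn Q lam) (eta := toTup H f) hB hX hR0 hXR0
        have hBc := aux_residual_ncard_le (Q := Q) (Hv := HeavyOn Q lam) (H := H)
          (eta := toTup H f) (R := R0)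
        have hCc := aux_tuples_le_inputSize hR0
        exact_mod_cast le_trans hA (le_trans hBc hCc)
      have hr_res : ∀ R ∈ QX X,
          ((Rpp Q (HeavyOn Q lam) H (toTup H f) X).ncard : ℝ)
            ≤ ((ResidualTuples Q (HeavyOn Q lam) H (toTup H f) R).ncard : ℝ) := by
        intro R hR
        have hm := Finset.mem_filter.mp hR
        exact_mod_cast aux_rpp_ncard_le (Hv := HeavyOn Q lam) (eta := toTup H f) hB hX hm.1 hm.2
      rcases Nat.eq_zero_or_pos (Rpp Q (HeavyOn Q lam) H (toTup H f) X).ncard with h0 | h0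
      · rw [h0]
        push_cast
        exact mul_nonneg (Real.rpow_nonneg hmR.le _)
          (Finset.prod_nonneg fun R _ => Real.rpow_nonneg (Nat.cast_nonneg _) _)
      · have hrpos : (0:ℝ) < ((Rpp Q (HeavyOn Q lam) H (toTup H f) X).ncard : ℝ) := by
          exact_mod_cast h0
        have hex : ((Rpp Q (HeavyOn Q lam) H (toTup H f) X).ncard : ℝ)
            = ((Rpp Q (HeavyOn Q lam) H (toTup H f) X).ncard : ℝ)
                ^ (1 - vertexWeight (edgeSet Q) W X)
              * ∏ R ∈ QX X,
                  ((Rpp Q (HeavyOn Q lam) H (toTup H f) X).ncard : ℝ) ^ W R.scheme := by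
          rw [← Real.rpow_sum_of_pos hrpos, ← hvw, ← Real.rpow_add hrpos]
          norm_num
        rw [hex]
        refine mul_le_mul (Real.rpow_le_rpow hrpos.le hr_m (by linarith)) ?_ ?_ ?_
        · refine Finset.prod_le_prod (fun R _ => Real.rpow_nonneg hrpos.le _) ?_
          intro R hR
          exact Real.rpow_le_rpow hrpos.le (hr_res R hR) (hWnn R (hQXsub X hR))
        · exact Finset.prod_nonneg fun R _ => Real.rpow_nonneg hrpos.le _
        · exact Real.rpow_nonneg hmR.le _
    have h3 : ((JoinIso Q (HeavyOn Q lam) H (toTup H f) (isolatedSet Q H)).ncard : ℝ)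
        ≤ (∏ X ∈ isolatedSet Q H, (inputSize Q : ℝ) ^ (1 - vertexWeight (edgeSet Q) W X))
          * ∏ X ∈ isolatedSet Q H, ∏ R ∈ QX X,
              ((ResidualTuples Q (HeavyOn Q lam) H (toTup H f) R).ncard : ℝ) ^ W R.scheme := by
      refine le_trans h1 ?_
      rw [← Finset.prod_mul_distrib]
      exact Finset.prod_le_prod (fun X _ => Nat.cast_nonneg _) h2
    have h4 : ∏ X ∈ isolatedSet Q H, (inputSize Q : ℝ) ^ (1 - vertexWeight (edgeSet Q) W X)
        = (inputSize Q : ℝ)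
            ^ (((isolatedSet Q H).card : ℝ)
                - ∑ Y ∈ isolatedSet Q H, vertexWeight (edgeSet Q) W Y) := by
      rw [← Real.rpow_sum_of_pos hmR, Finset.sum_sub_distrib, Finset.sum_const,
        nsmul_eq_mul, mul_one]
    have h5 : ∏ X ∈ isolatedSet Q H, ∏ R ∈ QX X,
          ((ResidualTuples Q (HeavyOn Q lam) H (toTup H f) R).ncard : ℝ) ^ W R.scheme
        = ∏ R ∈ CI,
            ((ResidualTuples Q (HeavyOn Q lam) H (toTup H f) R).ncard : ℝ) ^ W R.scheme := by
      rw [hCb]; exact (Finset.prod_biUnion hdisjQX).symm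
    have h6 : ∏ R ∈ CI,
          ((ResidualTuples Q (HeavyOn Q lam) H (toTup H f) R).ncard : ℝ) ^ W R.scheme
        = ∏ Z ∈ H, ∏ R ∈ CIZ Z,
            ((ResidualTuples Q (HeavyOn Q lam) H (toTup H f) R).ncard : ℝ) ^ W R.scheme := by
      rw [hCZb]; exact Finset.prod_biUnion hdisjCIZ
    have h7 : ∏ Z ∈ H, ∏ R ∈ CIZ Z,
          ((ResidualTuples Q (HeavyOn Q lam) H (toTup H f) R).ncard : ℝ) ^ W R.scheme
        ≤ ∏ x ∈ H.attach, ∏ R ∈ CIZ x.1,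
            ((({w ∈ R.tuples | w x.1 = some (f x.1 x.2)}).ncard : ℝ)) ^ W R.scheme := by
      rw [← Finset.prod_attach H (fun Z => ∏ R ∈ CIZ Z,
        ((ResidualTuples Q (HeavyOn Q lam) H (toTup H f) R).ncard : ℝ) ^ W R.scheme)]
      refine Finset.prod_le_prod
        (fun x _ => Finset.prod_nonneg fun R _ => Real.rpow_nonneg (Nat.cast_nonneg _) _) ?_
      intro x _
      refine Finset.prod_le_prod (fun R _ => Real.rpow_nonneg (Nat.cast_nonneg _) _) ?_
      intro R hR
      have hZsch : x.1 ∈ R.scheme := (Finset.mem_filter.mp hR).2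
      have hle := aux_residual_le_fiber (Q := Q) (Hv := HeavyOn Q lam)
        (Finset.mem_inter.mpr ⟨hZsch, x.2⟩) (hetaZ x.1 x.2)
      exact Real.rpow_le_rpow (Nat.cast_nonneg _) (by exact_mod_cast hle)
        (hWnn R (hCIZsub x.1 hR))
    calc ((JoinIso Q (HeavyOn Q lam) H (toTup H f) (isolatedSet Q H)).ncard : ℝ)
        ≤ _ := h3
      _ ≤ _ := by
          rw [h4, h5, h6]
          exact mul_le_mul_of_nonneg_left h7 (Real.rpow_nonneg hmR.le _)
  -- summing over all configurations
  have hM0 : (0:ℝ) ≤ (inputSize Q : ℝ)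
      ^ (((isolatedSet Q H).card : ℝ) - ∑ Y ∈ isolatedSet Q H, vertexWeight (edgeSet Q) W Y) :=
    Real.rpow_nonneg hmR.le _
  calc ∑ f ∈ H.pi (fun Z => hsF Z),
        ((JoinIso Q (HeavyOn Q lam) H (toTup H f) (isolatedSet Q H)).ncard : ℝ)
      ≤ ∑ f ∈ H.pi (fun Z => hsF Z),
          (inputSize Q : ℝ)
              ^ (((isolatedSet Q H).card : ℝ)
                  - ∑ Y ∈ isolatedSet Q H, vertexWeight (edgeSet Q) W Y)
            * ∏ x ∈ H.attach, ∏ R ∈ CIZ x.1,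
                ((({w ∈ R.tuples | w x.1 = some (f x.1 x.2)}).ncard : ℝ)) ^ W R.scheme :=
        Finset.sum_le_sum keyf
    _ = (inputSize Q : ℝ)
            ^ (((isolatedSet Q H).card : ℝ)
                - ∑ Y ∈ isolatedSet Q H, vertexWeight (edgeSet Q) W Y)
          * ∑ f ∈ H.pi (fun Z => hsF Z), ∏ x ∈ H.attach, ∏ R ∈ CIZ x.1,
              ((({w ∈ R.tuples | w x.1 = some (f x.1 x.2)}).ncard : ℝ)) ^ W R.scheme := by
        rw [Finset.mul_sum]
    _ = (inputSize Q : ℝ)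
            ^ (((isolatedSet Q H).card : ℝ)
                - ∑ Y ∈ isolatedSet Q H, vertexWeight (edgeSet Q) W Y)
          * ∏ Z ∈ H, ∑ z ∈ hsF Z, ∏ R ∈ CIZ Z,
              ((({w ∈ R.tuples | w Z = some z}).ncard : ℝ)) ^ W R.scheme := by
        rw [Finset.prod_sum]
    _ ≤ (inputSize Q : ℝ)
            ^ (((isolatedSet Q H).card : ℝ)
                - ∑ Y ∈ isolatedSet Q H, vertexWeight (edgeSet Q) W Y)
          * ∏ Z ∈ H, ((lam:ℝ) ^ (1 - ∑ R ∈ CIZ Z, W R.scheme)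
              * (inputSize Q : ℝ) ^ (∑ R ∈ CIZ Z, W R.scheme)) := by
        refine mul_le_mul_of_nonneg_left ?_ hM0
        refine Finset.prod_le_prod ?_ ?_
        · intro Z _
          exact Finset.sum_nonneg fun z _ =>
            Finset.prod_nonneg fun R _ => Real.rpow_nonneg (Nat.cast_nonneg _) _
        · intro Z hZ
          have hold := holder_padded (CIZ Z) (hsF Z) (fun R => W R.scheme)
            (fun R z => (({w ∈ R.tuples | w Z = some z}).ncard : ℝ))
            (fun R hR => hWnn R (hCIZsub Z hR))
            (fun R _ z _ => Nat.cast_nonneg _) (hwZ_le Z hZ)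
          refine le_trans hold ?_
          have hterm2 : ∏ R ∈ CIZ Z,
              (∑ z ∈ hsF Z, (({w ∈ R.tuples | w Z = some z}).ncard : ℝ)) ^ W R.scheme
              ≤ (inputSize Q : ℝ) ^ (∑ R ∈ CIZ Z, W R.scheme) := by
            rw [Real.rpow_sum_of_pos hmR]
            refine Finset.prod_le_prod
              (fun R _ => Real.rpow_nonneg (Finset.sum_nonneg fun z _ => Nat.cast_nonneg _) _) ?_
            intro R hR
            have hle : ∑ z ∈ hsF Z, (({w ∈ R.tuples | w Z = some z}).ncard : ℝ)
                ≤ (inputSize Q : ℝ) := by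
              rw [← Nat.cast_sum]
              exact_mod_cast le_trans (aux_fiber_sum_le R Z (hsF Z))
                (aux_tuples_le_inputSize (hCIZsub Z hR))
            exact Real.rpow_le_rpow (Finset.sum_nonneg fun z _ => Nat.cast_nonneg _) hle
              (hWnn R (hCIZsub Z hR))
          refine mul_le_mul ?_ hterm2 ?_ (Real.rpow_nonneg hlamR.le _)
          · exact Real.rpow_le_rpow (Nat.cast_nonneg _) (hsF_card Z)
              (by linarith [hwZ_le Z hZ])
          · exact Finset.prod_nonneg fun R _ =>
              Real.rpow_nonneg (Finset.sum_nonneg fun z _ => Nat.cast_nonneg _) _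
    _ = (lam : ℝ)
            ^ ((H.card : ℝ) - ∑ Y ∈ isolatedSet Q H, vertexWeight (edgeSet Q) W Y)
          * (inputSize Q : ℝ) ^ (isolatedSet Q H).card := by
        rw [Finset.prod_mul_distrib, ← Real.rpow_sum_of_pos hlamR, ← Real.rpow_sum_of_pos hmR,
          Finset.sum_sub_distrib, Finset.sum_const, nsmul_eq_mul, mul_one, ← hWIeq]
        rw [← Real.rpow_natCast (inputSize Q : ℝ) (isolatedSet Q H).card]
        rw [mul_comm ((inputSize Q : ℝ) ^ _ : ℝ), mul_assoc, ← Real.rpow_add hmR]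
        congr 1
        · congr 1
          ring

end BinaryJoins
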